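/- Let k > 1, M > 0 and τ > 1, and fix T, B₁, B₂, C₁, C₂, D₁, D₂ as in the context. There exists a constant Q > 0, depending only on k, τ, M, T, B₁, B₂, C₁, C₂, D₁, D₂, such that the following holds: for every real sequence (f_n)_{n≥1} with Σ_{n≥1} (1+n²)^{2k} f_n² ≤ M², g_n = Φ(n,φ) f_n, every square-summable (g_n^ε)_{n≥1} with ‖g − g^ε‖ ≤ ε and ‖φ − φ_ε‖_{L²(0,T)} ≤ ε, where 0 < τε < ‖g^ε‖, if μ > 0 is the (unique) solution of ρ(μ) = τε and (f_μ^ε)_n = Φ(n,φ_ε) g_n^ε / (μ² + Φ(n,φ_ε)²), then ‖f − f_μ^ε‖ ≤ Q · ε^{1/2}. -/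

import Mathlib

open Real Set MeasureTheory intervalIntegral



lemma sq_summable_mul_abs {a b : ℕ → ℝ} (ha : Summable fun n => (a n)^2)
    (hb : Summable fun n => (b n)^2) : Summable fun n => |a n * b n| := by
  refine Summable.of_nonneg_of_le (fun n => abs_nonneg _) (fun n => ?_)
    (((ha.add hb).div_const 2))
  have := sq_nonneg (|a n| - |b n|)
  rw [abs_mul]
  have h1 : |a n|^2 = a n ^2 := sq_abs _
  have h2 : |b n|^2 = b n ^2 := sq_abs _
  nlinarith [abs_nonneg (a n), abs_nonneg (b n)]

lemma my_cs {a b : ℕ → ℝ} (ha : Summable fun n => (a n)^2)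
    (hb : Summable fun n => (b n)^2) :
    ∑' n, |a n * b n| ≤ Real.sqrt (∑' n, (a n)^2) * Real.sqrt (∑' n, (b n)^2) := by
  have hA0 : (0:ℝ) ≤ Real.sqrt (∑' n, (a n)^2) := Real.sqrt_nonneg _
  have hB0 : (0:ℝ) ≤ Real.sqrt (∑' n, (b n)^2) := Real.sqrt_nonneg _
  set A := Real.sqrt (∑' n, (a n)^2) with hA
  set B := Real.sqrt (∑' n, (b n)^2) with hB
  have htA : ∑' n, (a n)^2 = A^2 := (Real.sq_sqrt (tsum_nonneg fun n => sq_nonneg _)).symm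
  have htB : ∑' n, (b n)^2 = B^2 := (Real.sq_sqrt (tsum_nonneg fun n => sq_nonneg _)).symm
  rcases eq_or_lt_of_le hA0 with h | hApos
  · have hz : ∀ n, |a n * b n| = 0 := by
      intro n
      have h3 : (a n)^2 ≤ 0 := by
        have := Summable.le_tsum ha n (fun j _ => sq_nonneg _)
        rw [htA, ← h] at this; nlinarith
      have : a n = 0 := by nlinarith [sq_nonneg (a n)]
      simp [this]
    rw [tsum_congr hz, tsum_zero]
    positivity
  rcases eq_or_lt_of_le hB0 with h | hBpos
  · have hz : ∀ n, |a n * b n| = 0 := by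
      intro n
      have h3 : (b n)^2 ≤ 0 := by
        have := Summable.le_tsum hb n (fun j _ => sq_nonneg _)
        rw [htB, ← h] at this; nlinarith
      have : b n = 0 := by nlinarith [sq_nonneg (b n)]
      simp [this]
    rw [tsum_congr hz, tsum_zero]
    positivity
  have key : ∀ n, |a n * b n| ≤ (B/A * (a n)^2 + A/B * (b n)^2)/2 := by
    intro n
    rw [abs_mul]
    have h1 : |a n|^2 = a n ^2 := sq_abs _
    have h2 : |b n|^2 = b n ^2 := sq_abs _
    have hs := sq_nonneg (Real.sqrt (B/A) * |a n| - Real.sqrt (A/B) * |b n|)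
    have e1 : Real.sqrt (B/A)^2 = B/A := Real.sq_sqrt (by positivity)
    have e2 : Real.sqrt (A/B)^2 = A/B := Real.sq_sqrt (by positivity)
    have e3 : Real.sqrt (B/A) * Real.sqrt (A/B) = 1 := by
      rw [← Real.sqrt_mul (by positivity)]
      rw [show B/A*(A/B) = 1 by field_simp]
      exact Real.sqrt_one
    nlinarith [abs_nonneg (a n), abs_nonneg (b n), mul_nonneg (abs_nonneg (a n)) (abs_nonneg (b n))]
  calc ∑' n, |a n * b n| ≤ ∑' n, (B/A * (a n)^2 + A/B * (b n)^2)/2 := by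
        refine Summable.tsum_le_tsum key (sq_summable_mul_abs ha hb) ?_
        exact (((ha.mul_left _).add (hb.mul_left _)).div_const 2)
    _ = (B/A * (∑' n, (a n)^2) + A/B * (∑' n, (b n)^2))/2 := by
        rw [tsum_div_const, Summable.tsum_add (ha.mul_left _) (hb.mul_left _), tsum_mul_left, tsum_mul_left]
    _ = A * B := by rw [htA, htB]; field_simp; ring

lemma sq_summable_mul {a b : ℕ → ℝ} (ha : Summable fun n => (a n)^2)
    (hb : Summable fun n => (b n)^2) : Summable fun n => a n * b n :=
  (sq_summable_mul_abs ha hb).of_abs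

lemma sq_summable_add {a b : ℕ → ℝ} (ha : Summable fun n => (a n)^2)
    (hb : Summable fun n => (b n)^2) : Summable fun n => (a n + b n)^2 := by
  have : (fun n => (a n + b n)^2) = fun n => (a n)^2 + (2 * (a n * b n) + (b n)^2) := by
    funext n; ring
  rw [this]
  exact ha.add (((sq_summable_mul ha hb).mul_left 2).add hb)

lemma my_minkowski {a b : ℕ → ℝ} (ha : Summable fun n => (a n)^2)
    (hb : Summable fun n => (b n)^2) :
    Real.sqrt (∑' n, (a n + b n)^2) ≤
      Real.sqrt (∑' n, (a n)^2) + Real.sqrt (∑' n, (b n)^2) := by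
  have hA0 : (0:ℝ) ≤ Real.sqrt (∑' n, (a n)^2) := Real.sqrt_nonneg _
  have hB0 : (0:ℝ) ≤ Real.sqrt (∑' n, (b n)^2) := Real.sqrt_nonneg _
  set A := Real.sqrt (∑' n, (a n)^2) with hA
  set B := Real.sqrt (∑' n, (b n)^2) with hB
  have htA : ∑' n, (a n)^2 = A^2 := (Real.sq_sqrt (tsum_nonneg fun n => sq_nonneg _)).symm
  have htB : ∑' n, (b n)^2 = B^2 := (Real.sq_sqrt (tsum_nonneg fun n => sq_nonneg _)).symm
  have hcs := my_cs ha hb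
  rw [← hA, ← hB] at hcs
  have expand : ∑' n, (a n + b n)^2
      = (∑' n, (a n)^2) + (2 * ∑' n, (a n * b n)) + ∑' n, (b n)^2 := by
    have : (fun n => (a n + b n)^2) = fun n => ((a n)^2 + 2 * (a n * b n)) + (b n)^2 := by
      funext n; ring
    rw [this, Summable.tsum_add (ha.add ((sq_summable_mul ha hb).mul_left 2)) hb,
      Summable.tsum_add ha ((sq_summable_mul ha hb).mul_left 2), tsum_mul_left]
  have hmul : ∑' n, (a n * b n) ≤ A * B := by
    refine le_trans ?_ hcs
    exact Summable.tsum_le_tsum (fun n => le_abs_self _) (sq_summable_mul ha hb) (sq_summable_mul_abs ha hb)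
  have h1 : ∑' n, (a n + b n)^2 ≤ (A + B)^2 := by
    rw [expand, htA, htB]; nlinarith
  calc Real.sqrt (∑' n, (a n + b n)^2) ≤ Real.sqrt ((A+B)^2) := Real.sqrt_le_sqrt h1
    _ = A + B := Real.sqrt_sq (by positivity)

lemma l2_mono {a b : ℕ → ℝ} (h : ∀ n, (a n)^2 ≤ (b n)^2)
    (hb : Summable fun n => (b n)^2) :
    Real.sqrt (∑' n, (a n)^2) ≤ Real.sqrt (∑' n, (b n)^2) := by
  refine Real.sqrt_le_sqrt (Summable.tsum_le_tsum h ?_ hb)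
  exact Summable.of_nonneg_of_le (fun n => sq_nonneg _) h hb

lemma sq_summable_of_le {a b : ℕ → ℝ} (h : ∀ n, (a n)^2 ≤ (b n)^2)
    (hb : Summable fun n => (b n)^2) : Summable fun n => (a n)^2 :=
  Summable.of_nonneg_of_le (fun n => sq_nonneg _) h hb

/-- If `|a n| ≤ c * |b n|` pointwise then `‖a‖ ≤ c ‖b‖`. -/
lemma l2_bound {a b : ℕ → ℝ} {c : ℝ} (hc : 0 ≤ c) (h : ∀ n, |a n| ≤ c * |b n|)
    (hb : Summable fun n => (b n)^2) :
    Real.sqrt (∑' n, (a n)^2) ≤ c * Real.sqrt (∑' n, (b n)^2) := by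
  have hsq : ∀ n, (a n)^2 ≤ c^2 * (b n)^2 := by
    intro n
    have := h n
    nlinarith [abs_nonneg (a n), abs_nonneg (b n), sq_abs (a n), sq_abs (b n)]
  calc Real.sqrt (∑' n, (a n)^2) ≤ Real.sqrt (∑' n, c^2 * (b n)^2) := by
        refine Real.sqrt_le_sqrt (Summable.tsum_le_tsum hsq ?_ (hb.mul_left _))
        exact Summable.of_nonneg_of_le (fun n => sq_nonneg _) hsq (hb.mul_left _)
    _ = c * Real.sqrt (∑' n, (b n)^2) := by
        rw [tsum_mul_left, Real.sqrt_mul (by positivity), Real.sqrt_sq hc]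


lemma bf_facts (T D₁ D₂ : ℝ) (hT : 0 < T) (hD₁ : 0 < D₁)
    (a : ℝ → ℝ) (ha : ContinuousOn a (Set.Icc 0 T))
    (haB : ∀ t ∈ Set.Icc 0 T, D₁ ≤ a t ∧ a t ≤ D₂)
    (A Bf : ℝ → ℝ) (hA : ∀ t, A t = ∫ s in (0:ℝ)..t, a s)
    (hBf : ∀ t, Bf t = A t - A T) :
    ContinuousOn Bf (Set.Icc 0 T) ∧
      ∀ t ∈ Set.Icc 0 T, -(D₂*(T-t)) ≤ Bf t ∧ Bf t ≤ 0 := by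
  have hIcc : Set.uIcc (0:ℝ) T = Set.Icc 0 T := Set.uIcc_of_le hT.le
  have haInt : IntegrableOn a (Set.Icc 0 T) := ha.integrableOn_Icc
  have hprim : ContinuousOn (fun x => ∫ t in (0:ℝ)..x, a t) (Set.Icc 0 T) := by
    have := intervalIntegral.continuousOn_primitive_interval (f := a) (μ := MeasureTheory.volume)
      (a := 0) (b := T) (by rwa [hIcc])
    rwa [hIcc] at this
  have hAc : ContinuousOn A (Set.Icc 0 T) := hprim.congr (fun t _ => hA t)
  have hBc : ContinuousOn Bf (Set.Icc 0 T) := by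
    have : ContinuousOn (fun t => A t - A T) (Set.Icc 0 T) := hAc.sub continuousOn_const
    exact this.congr (fun t _ => hBf t)
  refine ⟨hBc, fun t ht => ?_⟩
  have hInt1 : IntervalIntegrable a MeasureTheory.volume 0 t := by
    apply ContinuousOn.intervalIntegrable
    rw [Set.uIcc_of_le ht.1]
    exact ha.mono (Set.Icc_subset_Icc_right ht.2)
  have hInt2 : IntervalIntegrable a MeasureTheory.volume t T := by
    apply ContinuousOn.intervalIntegrable
    rw [Set.uIcc_of_le ht.2]
    exact ha.mono (Set.Icc_subset_Icc_left ht.1)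
  have hsplit : (∫ s in (0:ℝ)..t, a s) + (∫ s in t..T, a s) = ∫ s in (0:ℝ)..T, a s :=
    intervalIntegral.integral_add_adjacent_intervals hInt1 hInt2
  have hBval : Bf t = -(∫ s in t..T, a s) := by
    rw [hBf t, hA t, hA T, ← hsplit]; ring
  have hnn : 0 ≤ ∫ s in t..T, a s := by
    apply intervalIntegral.integral_nonneg ht.2
    intro u hu
    exact le_trans hD₁.le (haB u ⟨le_trans ht.1 hu.1, hu.2⟩).1
  have hub : (∫ s in t..T, a s) ≤ D₂ * (T - t) := by
    have : (∫ s in t..T, a s) ≤ ∫ _ in t..T, D₂ := by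
      apply intervalIntegral.integral_mono_on ht.2 hInt2 intervalIntegrable_const
      intro u hu
      exact (haB u ⟨le_trans ht.1 hu.1, hu.2⟩).2
    rwa [intervalIntegral.integral_const, smul_eq_mul, mul_comm] at this
  constructor
  · rw [hBval]; linarith
  · rw [hBval]; linarith

lemma em_facts (T D₂ : ℝ) (hT : 0 < T) (hD₂ : 0 < D₂)
    (Bf : ℝ → ℝ) (hBc : ContinuousOn Bf (Set.Icc 0 T))
    (hBb : ∀ t ∈ Set.Icc 0 T, -(D₂*(T-t)) ≤ Bf t ∧ Bf t ≤ 0)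
    (m : ℕ) (hm : 1 ≤ m) :
    T * Real.exp (-(D₂*T)) / (m:ℝ)^2 ≤ (∫ t in (0:ℝ)..T, Real.exp ((m:ℝ)^2 * Bf t)) ∧
      (∫ t in (0:ℝ)..T, Real.exp ((m:ℝ)^2 * Bf t)) ≤ T := by
  have hm1 : (1:ℝ) ≤ (m:ℝ)^2 := by
    have : (1:ℝ) ≤ (m:ℝ) := by exact_mod_cast hm
    nlinarith
  have hmpos : (0:ℝ) < (m:ℝ)^2 := by linarith
  set g : ℝ → ℝ := fun t => Real.exp ((m:ℝ)^2 * Bf t) with hg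
  have hgc : ContinuousOn g (Set.Icc 0 T) :=
    Real.continuous_exp.comp_continuousOn (continuousOn_const.mul hBc)
  have hgcInt : ∀ u v : ℝ, u ∈ Set.Icc 0 T → v ∈ Set.Icc 0 T → u ≤ v →
      IntervalIntegrable g MeasureTheory.volume u v := by
    intro u v hu hv huv
    apply ContinuousOn.intervalIntegrable
    rw [Set.uIcc_of_le huv]
    exact hgc.mono (Set.Icc_subset_Icc hu.1 hv.2)
  have h0T : (0:ℝ) ∈ Set.Icc (0:ℝ) T := ⟨le_refl _, hT.le⟩
  have hTT : T ∈ Set.Icc (0:ℝ) T := ⟨hT.le, le_refl _⟩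
  constructor
  · -- lower bound
    set δ : ℝ := T / (m:ℝ)^2 with hδ
    have hδpos : 0 < δ := by positivity
    have hδT : δ ≤ T := by
      rw [hδ, div_le_iff₀ hmpos]; nlinarith
    have hTδ : T - δ ∈ Set.Icc (0:ℝ) T := ⟨by linarith, by linarith⟩
    have hsplit : (∫ t in (0:ℝ)..(T-δ), g t) + (∫ t in (T-δ)..T, g t)
        = ∫ t in (0:ℝ)..T, g t :=
      intervalIntegral.integral_add_adjacent_intervals
        (hgcInt 0 (T-δ) h0T hTδ (by linarith)) (hgcInt (T-δ) T hTδ hTT (by linarith))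
    have h1 : 0 ≤ ∫ t in (0:ℝ)..(T-δ), g t := by
      apply intervalIntegral.integral_nonneg (by linarith)
      intro u _; exact (Real.exp_pos _).le
    have h2 : δ * Real.exp (-(D₂*T)) ≤ ∫ t in (T-δ)..T, g t := by
      have hc : (∫ _ in (T-δ)..T, Real.exp (-(D₂*T)))
          = δ * Real.exp (-(D₂*T)) := by
        rw [intervalIntegral.integral_const, smul_eq_mul]
        ring_nf
      rw [← hc]
      apply intervalIntegral.integral_mono_on (by linarith) intervalIntegrable_const
        (hgcInt (T-δ) T hTδ hTT (by linarith))
      intro u hu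
      have huIcc : u ∈ Set.Icc (0:ℝ) T := ⟨by linarith [hu.1, hTδ.1], hu.2⟩
      have hBu := (hBb u huIcc).1
      have : -(D₂*T) ≤ (m:ℝ)^2 * Bf u := by
        have h3 : -(D₂*(T-u)) ≤ Bf u := hBu
        have h4 : (m:ℝ)^2 * (-(D₂*(T-u))) ≤ (m:ℝ)^2 * Bf u :=
          mul_le_mul_of_nonneg_left h3 hmpos.le
        have h5 : T - u ≤ δ := by linarith [hu.1]
        have h6 : (m:ℝ)^2 * δ = T := by
          rw [hδ]; field_simp
        have h7 : (m:ℝ)^2 * (D₂*(T-u)) ≤ (m:ℝ)^2 * (D₂*δ) :=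
          mul_le_mul_of_nonneg_left (mul_le_mul_of_nonneg_left h5 hD₂.le) hmpos.le
        have h8 : (m:ℝ)^2*(D₂*δ) = D₂*T := by rw [← h6]; ring
        nlinarith [h4, h7, h8]
      exact Real.exp_le_exp.mpr this
    have : δ * Real.exp (-(D₂*T)) ≤ ∫ t in (0:ℝ)..T, g t := by
      rw [← hsplit]; linarith
    calc T * Real.exp (-(D₂*T)) / (m:ℝ)^2 = δ * Real.exp (-(D₂*T)) := by
          rw [hδ]; ring
      _ ≤ _ := this
  · -- upper bound
    have : (∫ t in (0:ℝ)..T, g t) ≤ ∫ _ in (0:ℝ)..T, (1:ℝ) := by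
      apply intervalIntegral.integral_mono_on hT.le (hgcInt 0 T h0T hTT hT.le)
        intervalIntegrable_const
      intro u hu
      have := (hBb u hu).2
      exact Real.exp_le_one_iff.mpr (by nlinarith)
    rwa [intervalIntegral.integral_const, smul_eq_mul, mul_one, sub_zero] at this

lemma phi_sandwich (T : ℝ) (hT : 0 < T)
    (Bf : ℝ → ℝ) (hBc : ContinuousOn Bf (Set.Icc 0 T))
    (m : ℕ) (h : ℝ → ℝ) (hc : ContinuousOn h (Set.Icc 0 T))
    (c₁ c₂ : ℝ) (hb : ∀ t ∈ Set.Icc 0 T, c₁ ≤ h t ∧ h t ≤ c₂) :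
    c₁ * (∫ t in (0:ℝ)..T, Real.exp ((m:ℝ)^2 * Bf t))
      ≤ (∫ t in (0:ℝ)..T, Real.exp ((m:ℝ)^2 * Bf t) * h t) ∧
    (∫ t in (0:ℝ)..T, Real.exp ((m:ℝ)^2 * Bf t) * h t)
      ≤ c₂ * (∫ t in (0:ℝ)..T, Real.exp ((m:ℝ)^2 * Bf t)) := by
  have hIcc : Set.uIcc (0:ℝ) T = Set.Icc 0 T := Set.uIcc_of_le hT.le
  have hgc : ContinuousOn (fun t => Real.exp ((m:ℝ)^2 * Bf t)) (Set.Icc 0 T) :=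
    Real.continuous_exp.comp_continuousOn (continuousOn_const.mul hBc)
  have hgInt : IntervalIntegrable (fun t => Real.exp ((m:ℝ)^2 * Bf t))
      MeasureTheory.volume 0 T := by
    apply ContinuousOn.intervalIntegrable; rwa [hIcc]
  have hghInt : IntervalIntegrable (fun t => Real.exp ((m:ℝ)^2 * Bf t) * h t)
      MeasureTheory.volume 0 T := by
    apply ContinuousOn.intervalIntegrable; rw [hIcc]; exact hgc.mul hc
  constructor
  · have : (∫ t in (0:ℝ)..T, c₁ * Real.exp ((m:ℝ)^2 * Bf t))
        ≤ ∫ t in (0:ℝ)..T, Real.exp ((m:ℝ)^2 * Bf t) * h t := by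
      apply intervalIntegral.integral_mono_on hT.le (hgInt.const_mul c₁) hghInt
      intro u hu
      have := (hb u hu).1
      nlinarith [Real.exp_pos ((m:ℝ)^2 * Bf u)]
    rwa [intervalIntegral.integral_const_mul] at this
  · have : (∫ t in (0:ℝ)..T, Real.exp ((m:ℝ)^2 * Bf t) * h t)
        ≤ ∫ t in (0:ℝ)..T, c₂ * Real.exp ((m:ℝ)^2 * Bf t) := by
      apply intervalIntegral.integral_mono_on hT.le hghInt (hgInt.const_mul c₂)
      intro u hu
      have := (hb u hu).2
      nlinarith [Real.exp_pos ((m:ℝ)^2 * Bf u)]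
    rwa [intervalIntegral.integral_const_mul] at this

lemma phi_diff_bound (T : ℝ) (hT : 0 < T)
    (Bf : ℝ → ℝ) (hBc : ContinuousOn Bf (Set.Icc 0 T))
    (hBle : ∀ t ∈ Set.Icc 0 T, Bf t ≤ 0)
    (m : ℕ) (φ φε : ℝ → ℝ) (hφc : ContinuousOn φ (Set.Icc 0 T))
    (hφεc : ContinuousOn φε (Set.Icc 0 T))
    (ε : ℝ) (hε : 0 < ε)
    (hL2 : (∫ t in (0:ℝ)..T, (φ t - φε t)^2) ≤ ε^2) :
    |(∫ t in (0:ℝ)..T, Real.exp ((m:ℝ)^2 * Bf t) * φ t)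
      - (∫ t in (0:ℝ)..T, Real.exp ((m:ℝ)^2 * Bf t) * φε t)|
    ≤ Real.sqrt T * ε := by
  have hIcc : Set.uIcc (0:ℝ) T = Set.Icc 0 T := Set.uIcc_of_le hT.le
  have hsT : (0:ℝ) < Real.sqrt T := Real.sqrt_pos.mpr hT
  set s : ℝ := ε / Real.sqrt T with hs
  have hspos : 0 < s := by positivity
  have hgc : ContinuousOn (fun t => Real.exp ((m:ℝ)^2 * Bf t)) (Set.Icc 0 T) :=
    Real.continuous_exp.comp_continuousOn (continuousOn_const.mul hBc)
  have hdc : ContinuousOn (fun t => φ t - φε t) (Set.Icc 0 T) := hφc.sub hφεc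
  have hprodc : ContinuousOn (fun t => Real.exp ((m:ℝ)^2 * Bf t) * (φ t - φε t))
      (Set.Icc 0 T) := hgc.mul hdc
  have hInt1 : IntervalIntegrable (fun t => Real.exp ((m:ℝ)^2 * Bf t) * φ t)
      MeasureTheory.volume 0 T := by
    apply ContinuousOn.intervalIntegrable; rw [hIcc]; exact hgc.mul hφc
  have hInt2 : IntervalIntegrable (fun t => Real.exp ((m:ℝ)^2 * Bf t) * φε t)
      MeasureTheory.volume 0 T := by
    apply ContinuousOn.intervalIntegrable; rw [hIcc]; exact hgc.mul hφεc
  have hIntProd : IntervalIntegrable (fun t => Real.exp ((m:ℝ)^2 * Bf t) * (φ t - φε t))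
      MeasureTheory.volume 0 T := by
    apply ContinuousOn.intervalIntegrable; rwa [hIcc]
  have hIntAbs : IntervalIntegrable (fun t => |Real.exp ((m:ℝ)^2 * Bf t) * (φ t - φε t)|)
      MeasureTheory.volume 0 T := hIntProd.abs
  have hIntSq : IntervalIntegrable (fun t => (φ t - φε t)^2) MeasureTheory.volume 0 T := by
    apply ContinuousOn.intervalIntegrable; rw [hIcc]; exact hdc.pow 2
  have hIntRHS : IntervalIntegrable (fun t => (φ t - φε t)^2 / (2*s) + s/2)
      MeasureTheory.volume 0 T := (hIntSq.div_const _).add intervalIntegrable_const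
  have hdiff : (∫ t in (0:ℝ)..T, Real.exp ((m:ℝ)^2 * Bf t) * φ t)
      - (∫ t in (0:ℝ)..T, Real.exp ((m:ℝ)^2 * Bf t) * φε t)
      = ∫ t in (0:ℝ)..T, Real.exp ((m:ℝ)^2 * Bf t) * (φ t - φε t) := by
    rw [← intervalIntegral.integral_sub hInt1 hInt2]
    congr 1; funext t; ring
  rw [hdiff]
  calc |∫ t in (0:ℝ)..T, Real.exp ((m:ℝ)^2 * Bf t) * (φ t - φε t)|
      ≤ ∫ t in (0:ℝ)..T, |Real.exp ((m:ℝ)^2 * Bf t) * (φ t - φε t)| :=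
        intervalIntegral.abs_integral_le_integral_abs hT.le
    _ ≤ ∫ t in (0:ℝ)..T, ((φ t - φε t)^2 / (2*s) + s/2) := by
        apply intervalIntegral.integral_mono_on hT.le hIntAbs hIntRHS
        intro u hu
        have hexp : Real.exp ((m:ℝ)^2 * Bf u) ≤ 1 :=
          Real.exp_le_one_iff.mpr (by nlinarith [hBle u hu, sq_nonneg ((m:ℝ))])
        have hexp0 : (0:ℝ) < Real.exp ((m:ℝ)^2 * Bf u) := Real.exp_pos _
        have h1 : |Real.exp ((m:ℝ)^2 * Bf u) * (φ u - φε u)| ≤ |φ u - φε u| := by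
          rw [abs_mul, abs_of_pos hexp0]
          nlinarith [abs_nonneg (φ u - φε u)]
        have h2 : |φ u - φε u| ≤ (φ u - φε u)^2/(2*s) + s/2 := by
          have := sq_nonneg (|φ u - φε u| - s)
          have hsq : |φ u - φε u|^2 = (φ u - φε u)^2 := sq_abs _
          rw [div_add_div _ _ (by positivity : (2*s:ℝ) ≠ 0) (by norm_num : (2:ℝ) ≠ 0)]
          rw [le_div_iff₀ (by positivity)]
          nlinarith
        linarith
    _ = (∫ t in (0:ℝ)..T, (φ t - φε t)^2)/(2*s) + T*(s/2) := by
        rw [intervalIntegral.integral_add (hIntSq.div_const _) intervalIntegrable_const,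
          intervalIntegral.integral_div, intervalIntegral.integral_const, smul_eq_mul, sub_zero]
    _ ≤ ε^2/(2*s) + T*(s/2) := by
        have : (0:ℝ) < 2*s := by positivity
        gcongr
    _ = Real.sqrt T * ε := by
        rw [hs]
        have hTT : Real.sqrt T * Real.sqrt T = T := Real.mul_self_sqrt hT.le
        field_simp
        ring_nf
        nlinarith [hTT]

lemma sq_le_of_abs_le' {x y : ℝ} (h : |x| ≤ y) : x^2 ≤ y^2 := by
  nlinarith [abs_nonneg x, sq_abs x]

lemma sq_summable_of_abs_le {a b : ℕ → ℝ} {c : ℝ} (h : ∀ n, |a n| ≤ c * |b n|)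
    (hb : Summable fun n => (b n)^2) : Summable fun n => (a n)^2 := by
  refine Summable.of_nonneg_of_le (fun n => sq_nonneg _) (fun n => ?_) (hb.mul_left (c^2))
  have h1 := h n
  nlinarith [abs_nonneg (a n), abs_nonneg (b n), sq_abs (a n), sq_abs (b n)]

lemma sq_mul_le_of_le_one {r x : ℝ} (h0 : 0 ≤ r) (h1 : r ≤ 1) : (r*x)^2 ≤ x^2 := by
  nlinarith only [mul_nonneg (mul_nonneg (sub_nonneg.mpr h1) (by linarith only [h0] : (0:ℝ) ≤ 1+r)) (sq_nonneg x), sq_nonneg x]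

lemma e4_aux {B₂ C₁ c' E x : ℝ} (hB₂ : 0 < B₂) (hC₁ : 0 < C₁) (hc' : 0 < c') (hx : 0 < x)
    (hE : c'/x ≤ E) : B₂/(C₁^2*E) ≤ B₂/(C₁^2*c') * x := by
  have h1 : B₂/(C₁^2*E) ≤ B₂/(C₁^2*(c'/x)) :=
    div_le_div_of_nonneg_left hB₂.le (by positivity)
      (mul_le_mul_of_nonneg_left hE (by positivity))
  calc B₂/(C₁^2*E) ≤ B₂/(C₁^2*(c'/x)) := h1
    _ = B₂/(C₁^2*c') * x := by field_simp

set_option maxHeartbeats 2000000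

/-- Theorem 8, case `k > 1`: with the a posteriori (discrepancy) choice
`ρ(μ) = τε`, there is a constant `Q > 0` depending only on
`k, τ, M, T, B₁, B₂, C₁, C₂, D₁, D₂` such that `‖f − f_μ^ε‖ ≤ Q · ε^{1/2}`. -/
theorem stmt_19
    (T D₁ D₂ B₁ B₂ C₁ C₂ : ℝ) (hT : 0 < T) (hD₁ : 0 < D₁) (hD₁₂ : D₁ ≤ D₂)
    (hB₁ : 0 < B₁) (hB₁₂ : B₁ ≤ B₂) (hC₁ : 0 < C₁) (hC₁₂ : C₁ ≤ C₂)
    (a φ φε : ℝ → ℝ) (ha : ContinuousOn a (Set.Icc 0 T))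
    (hφc : ContinuousOn φ (Set.Icc 0 T)) (hφεc : ContinuousOn φε (Set.Icc 0 T))
    (haB : ∀ t ∈ Set.Icc 0 T, D₁ ≤ a t ∧ a t ≤ D₂)
    (hφB : ∀ t ∈ Set.Icc 0 T, B₁ ≤ φ t ∧ φ t ≤ B₂)
    (hφεB : ∀ t ∈ Set.Icc 0 T, C₁ ≤ φε t ∧ φε t ≤ C₂)
    (A Bf : ℝ → ℝ) (hA : ∀ t, A t = ∫ s in (0:ℝ)..t, a s)
    (hBf : ∀ t, Bf t = A t - A T)
    (Φ : ℕ → (ℝ → ℝ) → ℝ)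
    (hΦ : ∀ (n : ℕ) (h : ℝ → ℝ), Φ n h = ∫ t in (0:ℝ)..T, Real.exp ((n:ℝ)^2 * Bf t) * h t)
    (k M τ : ℝ) (hk : 1 < k) (hM : 0 < M) (hτ : 1 < τ) :
    ∃ Q : ℝ, 0 < Q ∧
      ∀ (f g gε : ℕ → ℝ) (ε μ : ℝ),
        Summable (fun n : ℕ => ((1:ℝ) + ((n:ℝ)+1)^2) ^ (2*k) * (f (n+1))^2) →
        (∑' n : ℕ, ((1:ℝ) + ((n:ℝ)+1)^2) ^ (2*k) * (f (n+1))^2) ≤ M^2 →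
        (∀ n : ℕ, g (n+1) = Φ (n+1) φ * f (n+1)) →
        Summable (fun n : ℕ => (gε (n+1))^2) →
        Real.sqrt (∑' n : ℕ, (g (n+1) - gε (n+1))^2) ≤ ε →
        Real.sqrt (∫ t in (0:ℝ)..T, (φ t - φε t)^2) ≤ ε →
        0 < τ * ε →
        τ * ε < Real.sqrt (∑' n : ℕ, (gε (n+1))^2) →
        0 < μ →
        Real.sqrt (∑' n : ℕ, (μ^2 / (μ^2 + (Φ (n+1) φε)^2))^2 * (gε (n+1))^2) = τ * ε →
        Real.sqrt (∑' n : ℕ,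
            (f (n+1) - Φ (n+1) φε * gε (n+1) / (μ^2 + (Φ (n+1) φε)^2))^2)
          ≤ Q * ε ^ ((1:ℝ)/2) := by
  have hD₂ : 0 < D₂ := lt_of_lt_of_le hD₁ hD₁₂
  have hB₂ : 0 < B₂ := lt_of_lt_of_le hB₁ hB₁₂
  have hC₂ : 0 < C₂ := lt_of_lt_of_le hC₁ hC₁₂
  obtain ⟨hBc, hBb⟩ := bf_facts T D₁ D₂ hT hD₁ a ha haB A Bf hA hBf
  set c' : ℝ := T * Real.exp (-(D₂*T)) with hc'
  have hc'pos : 0 < c' := by positivity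
  set K : ℝ := B₂ / (C₁^2 * c') with hK
  have hKpos : 0 < K := by positivity
  set η : ℝ := (τ-1)/(K*M) with hη
  have hηpos : 0 < η := by
    apply div_pos (by linarith) (by positivity)
  set εmax : ℝ := B₂*T*M/(τ-1) with hεmax
  have hεmaxpos : 0 < εmax := by
    apply div_pos (by positivity) (by linarith)
  set Q₁ : ℝ := Real.sqrt ((τ+1)^2 + εmax^(k-1) * M^2 / (B₁*c')^(2*k)) with hQ₁
  have hQ₁pos : 0 < Q₁ := by
    apply Real.sqrt_pos.mpr
    have h1 : (0:ℝ) < εmax^(k-1) := Real.rpow_pos_of_pos hεmaxpos _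
    have h2 : (0:ℝ) < (B₁*c')^(2*k) := Real.rpow_pos_of_pos (by positivity) _
    have : (0:ℝ) ≤ εmax^(k-1) * M^2 / (B₁*c')^(2*k) := by positivity
    nlinarith
  set Q₂ : ℝ := Real.sqrt T * M / (2*Real.sqrt η) with hQ₂
  have hQ₂pos : 0 < Q₂ := by
    apply div_pos (by positivity) (by positivity)
  set Q₃ : ℝ := 1/(2*Real.sqrt η) with hQ₃
  have hQ₃pos : 0 < Q₃ := by positivity
  refine ⟨Q₁ + Q₂ + Q₃, by positivity, ?_⟩
  intro f g gε ε μ hfsum hfM hgdef hgεsum hnoise hφnoise hτε hτεlt hμ hdisc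
  have hε : 0 < ε := by nlinarith only [hτε, hτ]
  have hsε : 0 < Real.sqrt ε := Real.sqrt_pos.mpr hε
  -- Basic notation
  set s : ℕ → ℝ := fun n => Φ (n+1) φε with hsdef
  set st : ℕ → ℝ := fun n => Φ (n+1) φ with hstdef
  set En : ℕ → ℝ := fun n => ∫ t in (0:ℝ)..T, Real.exp ((((n+1:ℕ)):ℝ)^2 * Bf t) with hEndef
  have hEn : ∀ n : ℕ, c' / ((n:ℝ)+1)^2 ≤ En n ∧ En n ≤ T := by
    intro n
    have := em_facts T D₂ hT hD₂ Bf hBc hBb (n+1) (Nat.le_add_left 1 n)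
    have hcast : (((n+1:ℕ)):ℝ) = (n:ℝ)+1 := by push_cast; ring
    rw [hcast] at this
    rw [hEndef]
    simp only [hcast]
    exact this
  have hEnpos : ∀ n : ℕ, 0 < En n := by
    intro n
    have := (hEn n).1
    have h2 : 0 < c' / ((n:ℝ)+1)^2 := by positivity
    linarith only [this, h2]
  have hφs : ∀ n : ℕ, C₁ * En n ≤ s n ∧ s n ≤ C₂ * En n := by
    intro n
    have := phi_sandwich T hT Bf hBc (n+1) φε hφεc C₁ C₂ hφεB
    rw [hsdef]
    simp only
    rw [hΦ (n+1) φε]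
    exact this
  have hφst : ∀ n : ℕ, B₁ * En n ≤ st n ∧ st n ≤ B₂ * En n := by
    intro n
    have := phi_sandwich T hT Bf hBc (n+1) φ hφc B₁ B₂ hφB
    rw [hstdef]
    simp only
    rw [hΦ (n+1) φ]
    exact this
  have hspos : ∀ n : ℕ, 0 < s n := fun n =>
    lt_of_lt_of_le (mul_pos hC₁ (hEnpos n)) (hφs n).1
  have hstpos : ∀ n : ℕ, 0 < st n := fun n =>
    lt_of_lt_of_le (mul_pos hB₁ (hEnpos n)) (hφst n).1
  have hstT : ∀ n : ℕ, st n ≤ B₂ * T := by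
    intro n
    calc st n ≤ B₂ * En n := (hφst n).2
      _ ≤ B₂ * T := mul_le_mul_of_nonneg_left (hEn n).2 hB₂.le
  have hstlb : ∀ n : ℕ, B₁ * c' / (1 + ((n:ℝ)+1)^2) ≤ st n := by
    intro n
    have h1 := (hEn n).1
    have h2 := (hφst n).1
    have hx : (0:ℝ) < ((n:ℝ)+1)^2 := by positivity
    calc B₁ * c' / (1 + ((n:ℝ)+1)^2) ≤ B₁ * c' / (((n:ℝ)+1)^2) := by
          apply div_le_div_of_nonneg_left (by positivity) hx (by linarith only [])
      _ = B₁ * (c' / ((n:ℝ)+1)^2) := by ring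
      _ ≤ B₁ * En n := mul_le_mul_of_nonneg_left h1 hB₁.le
      _ ≤ st n := h2
  have hφsL2 : (∫ t in (0:ℝ)..T, (φ t - φε t)^2) ≤ ε^2 := by
    have hnn : 0 ≤ ∫ t in (0:ℝ)..T, (φ t - φε t)^2 :=
      intervalIntegral.integral_nonneg hT.le (fun u _ => sq_nonneg _)
    have := Real.sq_sqrt hnn
    nlinarith only [this, hφnoise, Real.sqrt_nonneg (∫ t in (0:ℝ)..T, (φ t - φε t)^2)]
  have hdφ : ∀ n : ℕ, |st n - s n| ≤ Real.sqrt T * ε := by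
    intro n
    have := phi_diff_bound T hT Bf hBc (fun t ht => (hBb t ht).2) (n+1) φ φε hφc hφεc ε hε hφsL2
    rw [hstdef, hsdef]
    simp only
    rw [hΦ (n+1) φ, hΦ (n+1) φε]
    exact this
  -- weights
  set w : ℕ → ℝ := fun n => (1 + ((n:ℝ)+1)^2)^k * f (n+1) with hwdef
  have hxpos : ∀ n : ℕ, (0:ℝ) < 1 + ((n:ℝ)+1)^2 := fun n => by positivity
  have hx1 : ∀ n : ℕ, (1:ℝ) ≤ 1 + ((n:ℝ)+1)^2 := fun n => by
    nlinarith only [sq_nonneg ((n:ℝ)+1)]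
  have hwsq : ∀ n : ℕ, (w n)^2 = (1 + ((n:ℝ)+1)^2)^(2*k) * (f (n+1))^2 := by
    intro n
    rw [hwdef]
    simp only
    rw [mul_pow]
    congr 1
    rw [← Real.rpow_natCast ((1 + ((n:ℝ)+1)^2)^k) 2, ← Real.rpow_mul (hxpos n).le]
    norm_num
    rw [mul_comm]
  have hwsum : Summable (fun n => (w n)^2) := hfsum.congr (fun n => (hwsq n).symm)
  have hwM : ∑' n, (w n)^2 ≤ M^2 := by
    rw [tsum_congr hwsq]; exact hfM
  have hwnn : (0:ℝ) ≤ ∑' n, (w n)^2 := tsum_nonneg (fun n => sq_nonneg _)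
  have hLw : Real.sqrt (∑' n, (w n)^2) ≤ M := by
    calc Real.sqrt (∑' n, (w n)^2) ≤ Real.sqrt (M^2) := Real.sqrt_le_sqrt hwM
      _ = M := Real.sqrt_sq hM.le
  have hfw : ∀ n : ℕ, (f (n+1))^2 ≤ (w n)^2 := by
    intro n
    rw [hwsq n]
    have h1 : (1:ℝ) ≤ (1 + ((n:ℝ)+1)^2)^(2*k) :=
      Real.one_le_rpow (hx1 n) (by linarith only [hk])
    nlinarith only [h1, sq_nonneg (f (n+1))]
  have hfsum' : Summable (fun n => (f (n+1))^2) := sq_summable_of_le hfw hwsum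
  have hLf : Real.sqrt (∑' n, (f (n+1))^2) ≤ M :=
    le_trans (l2_mono hfw hwsum) hLw
  -- g facts
  have hgst : ∀ n : ℕ, g (n+1) = st n * f (n+1) := fun n => hgdef n
  have hgb : ∀ n : ℕ, |g (n+1)| ≤ (B₂*T) * |f (n+1)| := by
    intro n
    rw [hgst n, abs_mul, abs_of_pos (hstpos n)]
    exact mul_le_mul_of_nonneg_right (hstT n) (abs_nonneg _)
  have hgsum' : Summable (fun n => (g (n+1))^2) := sq_summable_of_abs_le hgb hfsum'
  have hdsum : Summable (fun n => (g (n+1) - gε (n+1))^2) := by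
    have h1 : Summable (fun n : ℕ => (-(gε (n+1)))^2) := hgεsum.congr (fun n => by ring)
    exact (sq_summable_add hgsum' h1).congr (fun n => by ring)
  have hd'sum : Summable (fun n => (gε (n+1) - g (n+1))^2) := hdsum.congr (fun n => by ring)
  -- the Tikhonov factor
  set r : ℕ → ℝ := fun n => μ^2/(μ^2 + (s n)^2) with hrdef
  have hdenpos : ∀ n, 0 < μ^2 + (s n)^2 :=
    fun n => add_pos_of_pos_of_nonneg (pow_pos hμ 2) (sq_nonneg _)
  have hr0 : ∀ n, 0 < r n := fun n => div_pos (pow_pos hμ 2) (hdenpos n)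
  have hr1 : ∀ n, r n ≤ 1 := by
    intro n
    rw [hrdef]
    simp only
    rw [div_le_one (hdenpos n)]
    linarith only [sq_nonneg (s n)]
  have hamgm : ∀ n, s n/(μ^2 + (s n)^2) ≤ 1/(2*μ) := by
    intro n
    rw [div_le_div_iff₀ (hdenpos n) (by linarith only [hμ] : (0:ℝ) < 2*μ)]
    nlinarith only [sq_nonneg (μ - s n)]
  have hrsq_le : ∀ (x : ℝ) (n : ℕ), (r n * x)^2 ≤ x^2 :=
    fun x n => sq_mul_le_of_le_one (hr0 n).le (hr1 n)
  -- discrepancy restated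
  have hdisc' : Real.sqrt (∑' n, (r n * gε (n+1))^2) = τ*ε := by
    rw [← hdisc]
    congr 1
    refine tsum_congr fun n => ?_
    rw [hrdef, hsdef]
    simp only
    rw [mul_pow]
  -- summabilities
  have hrgεsum : Summable (fun n => (r n * gε (n+1))^2) :=
    sq_summable_of_le (fun n => hrsq_le _ n) hgεsum
  have hrgsum : Summable (fun n => (r n * g (n+1))^2) :=
    sq_summable_of_le (fun n => hrsq_le _ n) hgsum'
  have hrdsum : Summable (fun n => (r n * (gε (n+1) - g (n+1)))^2) :=
    sq_summable_of_le (fun n => hrsq_le _ n) hd'sum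
  have hrd2sum : Summable (fun n => (r n * (g (n+1) - gε (n+1)))^2) :=
    sq_summable_of_le (fun n => hrsq_le _ n) hdsum
  -- noise pieces bounds
  have hLrd : Real.sqrt (∑' n, (r n * (gε (n+1) - g (n+1)))^2) ≤ ε := by
    calc Real.sqrt (∑' n, (r n * (gε (n+1) - g (n+1)))^2)
        ≤ Real.sqrt (∑' n, (gε (n+1) - g (n+1))^2) :=
          l2_mono (fun n => hrsq_le _ n) hd'sum
      _ = Real.sqrt (∑' n, (g (n+1) - gε (n+1))^2) := by
          congr 1; exact tsum_congr fun n => by ring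
      _ ≤ ε := hnoise
  have hLrd2 : Real.sqrt (∑' n, (r n * (g (n+1) - gε (n+1)))^2) ≤ ε :=
    le_trans (l2_mono (fun n => hrsq_le _ n) hdsum) hnoise
  -- lower bound for μ
  have hrg_ptw : ∀ n, |r n * g (n+1)| ≤ (K*μ^2) * |w n| := by
    intro n
    have hKμnn : (0:ℝ) ≤ K*μ^2 := (mul_pos hKpos (pow_pos hμ 2)).le
    have hrst : r n * st n ≤ K*μ^2*(1+((n:ℝ)+1)^2) := by
      have hss : (s n)^2 ≤ μ^2 + (s n)^2 := by linarith only [sq_nonneg μ]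
      have e1 : st n/(μ^2+(s n)^2) ≤ st n/((s n)^2) :=
        div_le_div_of_nonneg_left (hstpos n).le (pow_pos (hspos n) 2) hss
      have e2 : st n/((s n)^2) ≤ (B₂ * En n)/((C₁ * En n)^2) := by
        apply div_le_div₀ (mul_pos hB₂ (hEnpos n)).le (hφst n).2
          (pow_pos (mul_pos hC₁ (hEnpos n)) 2)
        exact pow_le_pow_left₀ (mul_pos hC₁ (hEnpos n)).le (hφs n).1 2
      have e3 : (B₂*En n)/((C₁*En n)^2) = B₂/(C₁^2*En n) := by
        field_simp [(hEnpos n).ne']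
      have e4 : B₂/(C₁^2*En n) ≤ K * ((n:ℝ)+1)^2 := by
        rw [hK]
        exact e4_aux hB₂ hC₁ hc'pos (by positivity) (hEn n).1
      have e5 : K * ((n:ℝ)+1)^2 ≤ K * (1+((n:ℝ)+1)^2) := by nlinarith only [hKpos]
      have e6 : st n/(μ^2+(s n)^2) ≤ K * (1+((n:ℝ)+1)^2) := by
        calc st n/(μ^2+(s n)^2) ≤ st n/((s n)^2) := e1
          _ ≤ (B₂ * En n)/((C₁ * En n)^2) := e2
          _ = B₂/(C₁^2*En n) := e3
          _ ≤ K * ((n:ℝ)+1)^2 := e4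
          _ ≤ K * (1+((n:ℝ)+1)^2) := e5
      have hre : r n * st n = μ^2 * (st n/(μ^2+(s n)^2)) := by
        rw [hrdef]; simp only; ring
      rw [hre]
      calc μ^2 * (st n/(μ^2+(s n)^2)) ≤ μ^2 * (K * (1+((n:ℝ)+1)^2)) :=
            mul_le_mul_of_nonneg_left e6 (sq_nonneg μ)
        _ = K*μ^2*(1+((n:ℝ)+1)^2) := by ring
    have hxk : (1+((n:ℝ)+1)^2) ≤ (1+((n:ℝ)+1)^2)^k := by
      nth_rewrite 1 [show (1+((n:ℝ)+1)^2) = (1+((n:ℝ)+1)^2)^(1:ℝ) from (Real.rpow_one _).symm]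
      exact Real.rpow_le_rpow_of_exponent_le (hx1 n) hk.le
    have hwabs : |w n| = (1+((n:ℝ)+1)^2)^k * |f (n+1)| := by
      rw [hwdef]
      simp only
      rw [abs_mul, abs_of_pos (Real.rpow_pos_of_pos (hxpos n) k)]
    rw [abs_mul, hgst n, abs_mul, abs_of_pos (hstpos n), abs_of_pos (hr0 n), hwabs]
    calc r n * (st n * |f (n+1)|) = (r n * st n) * |f (n+1)| := by ring
      _ ≤ (K*μ^2*(1+((n:ℝ)+1)^2)) * |f (n+1)| :=
          mul_le_mul_of_nonneg_right hrst (abs_nonneg _)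
      _ ≤ (K*μ^2*((1+((n:ℝ)+1)^2)^k)) * |f (n+1)| :=
          mul_le_mul_of_nonneg_right
            (mul_le_mul_of_nonneg_left hxk hKμnn) (abs_nonneg _)
      _ = K*μ^2 * ((1+((n:ℝ)+1)^2)^k * |f (n+1)|) := by ring
  have hrg_ub : Real.sqrt (∑' n, (r n * g (n+1))^2) ≤ K*M*μ^2 := by
    have hKμnn : (0:ℝ) ≤ K*μ^2 := (mul_pos hKpos (pow_pos hμ 2)).le
    calc Real.sqrt (∑' n, (r n * g (n+1))^2) ≤ (K*μ^2) * Real.sqrt (∑' n, (w n)^2) :=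
          l2_bound hKμnn hrg_ptw hwsum
      _ ≤ (K*μ^2) * M := mul_le_mul_of_nonneg_left hLw hKμnn
      _ = K*M*μ^2 := by ring
  have hτle : τ*ε ≤ Real.sqrt (∑' n, (r n * g (n+1))^2) + ε := by
    calc τ*ε = Real.sqrt (∑' n, (r n * gε (n+1))^2) := hdisc'.symm
      _ = Real.sqrt (∑' n, (r n * g (n+1) + r n * (gε (n+1) - g (n+1)))^2) := by
          congr 1; exact tsum_congr fun n => by ring
      _ ≤ Real.sqrt (∑' n, (r n * g (n+1))^2)
          + Real.sqrt (∑' n, (r n * (gε (n+1) - g (n+1)))^2) := my_minkowski hrgsum hrdsum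
      _ ≤ Real.sqrt (∑' n, (r n * g (n+1))^2) + ε := add_le_add_right hLrd _
  have hμ2 : η * ε ≤ μ^2 := by
    have h1 : (τ-1)*ε ≤ K*M*μ^2 := by linarith only [hrg_ub, hτle]
    rw [hη, div_mul_eq_mul_div, div_le_iff₀ (mul_pos hKpos hM)]
    calc (τ-1)*ε ≤ K*M*μ^2 := h1
      _ = μ^2*(K*M) := by ring
  have hμlb : Real.sqrt η * Real.sqrt ε ≤ μ := by
    calc Real.sqrt η * Real.sqrt ε = Real.sqrt (η*ε) := (Real.sqrt_mul hηpos.le ε).symm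
      _ ≤ Real.sqrt (μ^2) := Real.sqrt_le_sqrt hμ2
      _ = μ := Real.sqrt_sq hμ.le
  have hsη : 0 < Real.sqrt η := Real.sqrt_pos.mpr hηpos
  have hfrac : ε/(2*μ) ≤ Real.sqrt ε/(2*Real.sqrt η) := by
    rw [div_le_div_iff₀ (by linarith only [hμ] : (0:ℝ) < 2*μ)
      (by linarith only [hsη] : (0:ℝ) < 2*Real.sqrt η)]
    have hεs : Real.sqrt ε * Real.sqrt ε = ε := Real.mul_self_sqrt hε.le
    have hkey : 2*Real.sqrt ε*(Real.sqrt η*Real.sqrt ε) ≤ 2*Real.sqrt ε*μ :=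
      mul_le_mul_of_nonneg_left hμlb (by positivity)
    have hrw : 2*Real.sqrt ε*(Real.sqrt η*Real.sqrt ε) = ε*(2*Real.sqrt η) := by
      linear_combination (2*Real.sqrt η) * hεs
    linarith only [hkey, hrw]
  -- ε is bounded
  have hεub : ε ≤ εmax := by
    have h1 : Real.sqrt (∑' n, (gε (n+1))^2)
        ≤ Real.sqrt (∑' n, (g (n+1))^2) + ε := by
      calc Real.sqrt (∑' n, (gε (n+1))^2)
          = Real.sqrt (∑' n, (g (n+1) + (gε (n+1) - g (n+1)))^2) := by
            congr 1; exact tsum_congr fun n => by ring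
        _ ≤ Real.sqrt (∑' n, (g (n+1))^2) + Real.sqrt (∑' n, (gε (n+1) - g (n+1))^2) :=
            my_minkowski hgsum' hd'sum
        _ ≤ Real.sqrt (∑' n, (g (n+1))^2) + ε := by
            have h2 : Real.sqrt (∑' n, (gε (n+1) - g (n+1))^2)
                = Real.sqrt (∑' n, (g (n+1) - gε (n+1))^2) := by
              congr 1; exact tsum_congr fun n => by ring
            rw [h2]
            exact add_le_add_right hnoise _
    have h2 : Real.sqrt (∑' n, (g (n+1))^2) ≤ (B₂*T)*M := by
      calc Real.sqrt (∑' n, (g (n+1))^2) ≤ (B₂*T) * Real.sqrt (∑' n, (f (n+1))^2) :=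
            l2_bound (mul_pos hB₂ hT).le hgb hfsum'
        _ ≤ (B₂*T)*M := mul_le_mul_of_nonneg_left hLf (mul_pos hB₂ hT).le
    rw [hεmax, le_div_iff₀ (by linarith only [hτ] : (0:ℝ) < τ-1)]
    linarith only [hτεlt, h1, h2]
  -- upper bound for ‖r g‖
  have hrg_ub2 : Real.sqrt (∑' n, (r n * g (n+1))^2) ≤ (τ+1)*ε := by
    calc Real.sqrt (∑' n, (r n * g (n+1))^2)
        = Real.sqrt (∑' n, (r n * gε (n+1) + r n * (g (n+1) - gε (n+1)))^2) := by
          congr 1; exact tsum_congr fun n => by ring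
      _ ≤ Real.sqrt (∑' n, (r n * gε (n+1))^2)
          + Real.sqrt (∑' n, (r n * (g (n+1) - gε (n+1)))^2) := my_minkowski hrgεsum hrd2sum
      _ ≤ τ*ε + ε := by rw [hdisc']; exact add_le_add_right hLrd2 _
      _ = (τ+1)*ε := by ring
  -- Term I pointwise bound
  have hB₁c' : (0:ℝ) < B₁*c' := mul_pos hB₁ hc'pos
  have hIptw : ∀ n, (r n * f (n+1))^2
      ≤ (r n * g (n+1))^2/ε + (Real.sqrt ε/(B₁*c'))^(2*k) * (w n)^2 := by
    intro n
    have h2 : (0:ℝ) ≤ (Real.sqrt ε/(B₁*c'))^(2*k) * (w n)^2 :=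
      mul_nonneg (Real.rpow_nonneg (div_nonneg (Real.sqrt_nonneg _) hB₁c'.le) _) (sq_nonneg _)
    rcases le_or_gt (Real.sqrt ε) (st n) with hcase | hcase
    · have hst2 : ε ≤ (st n)^2 := by
        nlinarith only [hcase, Real.sqrt_nonneg ε, Real.mul_self_sqrt hε.le]
      have hg2 : (r n * g (n+1))^2 = (st n)^2 * (r n * f (n+1))^2 := by
        rw [hgst n]; ring
      have h3 : (r n * f (n+1))^2 ≤ (r n * g (n+1))^2/ε := by
        rw [hg2, le_div_iff₀ hε]
        nlinarith only [hst2, sq_nonneg (r n * f (n+1))]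
      linarith only [h2, h3]
    · have hxinv : 1/(1 + ((n:ℝ)+1)^2) ≤ Real.sqrt ε/(B₁*c') := by
        have h0 := hstlb n
        rw [div_le_div_iff₀ (hxpos n) hB₁c']
        have h1 : B₁ * c' ≤ st n * (1 + ((n:ℝ)+1)^2) := by
          rw [div_le_iff₀ (hxpos n)] at h0
          linarith only [h0]
        nlinarith only [h1, hcase, hxpos n]
      have hf2 : (f (n+1))^2 = (w n)^2 * (1/(1 + ((n:ℝ)+1)^2))^(2*k) := by
        have hxk : (0:ℝ) < (1 + ((n:ℝ)+1)^2)^(2*k) := Real.rpow_pos_of_pos (hxpos n) _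
        rw [hwsq n, one_div, Real.inv_rpow (hxpos n).le]
        field_simp
      have hmono : (1/(1 + ((n:ℝ)+1)^2))^(2*k) ≤ (Real.sqrt ε/(B₁*c'))^(2*k) :=
        Real.rpow_le_rpow (by positivity) hxinv (by linarith only [hk])
      have h4 : (r n * f (n+1))^2 ≤ (f (n+1))^2 := hrsq_le _ n
      have h5 : (0:ℝ) ≤ (r n * g (n+1))^2/ε := div_nonneg (sq_nonneg _) hε.le
      calc (r n * f (n+1))^2 ≤ (f (n+1))^2 := h4
        _ = (w n)^2 * (1/(1 + ((n:ℝ)+1)^2))^(2*k) := hf2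
        _ ≤ (w n)^2 * (Real.sqrt ε/(B₁*c'))^(2*k) :=
            mul_le_mul_of_nonneg_left hmono (sq_nonneg _)
        _ = (Real.sqrt ε/(B₁*c'))^(2*k) * (w n)^2 := by ring
        _ ≤ (r n * g (n+1))^2/ε + (Real.sqrt ε/(B₁*c'))^(2*k) * (w n)^2 := by
            linarith only [h5]
  have hIsum : Summable (fun n => (r n * f (n+1))^2) :=
    sq_summable_of_le (fun n => hrsq_le _ n) hfsum'
  have hLI : Real.sqrt (∑' n, (r n * f (n+1))^2) ≤ Q₁ * Real.sqrt ε := by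
    have hsum_rhs : Summable (fun n =>
        (r n * g (n+1))^2/ε + (Real.sqrt ε/(B₁*c'))^(2*k) * (w n)^2) :=
      (hrgsum.div_const ε).add (hwsum.mul_left _)
    have h1 : (∑' n, (r n * f (n+1))^2)
        ≤ (∑' n, (r n * g (n+1))^2)/ε + (Real.sqrt ε/(B₁*c'))^(2*k) * (∑' n, (w n)^2) := by
      calc (∑' n, (r n * f (n+1))^2)
          ≤ ∑' n, ((r n * g (n+1))^2/ε + (Real.sqrt ε/(B₁*c'))^(2*k) * (w n)^2) :=
            Summable.tsum_le_tsum hIptw hIsum hsum_rhs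
        _ = (∑' n, (r n * g (n+1))^2)/ε + (Real.sqrt ε/(B₁*c'))^(2*k) * (∑' n, (w n)^2) := by
            rw [Summable.tsum_add (hrgsum.div_const ε) (hwsum.mul_left _), tsum_div_const, tsum_mul_left]
    have hrgnn : (0:ℝ) ≤ ∑' n, (r n * g (n+1))^2 := tsum_nonneg (fun n => sq_nonneg _)
    have h2 : (∑' n, (r n * g (n+1))^2) ≤ ((τ+1)*ε)^2 := by
      nlinarith only [hrg_ub2, Real.sq_sqrt hrgnn,
        Real.sqrt_nonneg (∑' n, (r n * g (n+1))^2)]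
    have hden : (0:ℝ) < (B₁*c')^(2*k) := Real.rpow_pos_of_pos hB₁c' _
    have hemk : (0:ℝ) < εmax^(k-1) := Real.rpow_pos_of_pos hεmaxpos _
    have h3 : (Real.sqrt ε/(B₁*c'))^(2*k) ≤ ε * (εmax^(k-1)/(B₁*c')^(2*k)) := by
      have hnum : (Real.sqrt ε)^(2*k) ≤ ε * εmax^(k-1) := by
        have he1 : (Real.sqrt ε)^(2*k) = ε^k := by
          rw [Real.sqrt_eq_rpow, ← Real.rpow_mul hε.le,
            show (1/2:ℝ)*(2*k) = k by ring]
        have he2 : ε^k = ε^(1:ℝ) * ε^(k-1) := by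
          rw [← Real.rpow_add hε]
          norm_num
        calc (Real.sqrt ε)^(2*k) = ε^k := he1
          _ = ε^(1:ℝ) * ε^(k-1) := he2
          _ = ε * ε^(k-1) := by rw [Real.rpow_one]
          _ ≤ ε * εmax^(k-1) := mul_le_mul_of_nonneg_left
              (Real.rpow_le_rpow hε.le hεub (by linarith only [hk])) hε.le
      calc (Real.sqrt ε/(B₁*c'))^(2*k) = (Real.sqrt ε)^(2*k)/(B₁*c')^(2*k) :=
            Real.div_rpow (Real.sqrt_nonneg _) hB₁c'.le _
        _ ≤ (ε * εmax^(k-1))/(B₁*c')^(2*k) := by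
            rw [div_le_div_iff₀ hden hden]
            nlinarith only [mul_le_mul_of_nonneg_right hnum hden.le]
        _ = ε * (εmax^(k-1)/(B₁*c')^(2*k)) := by ring
    have h4 : (∑' n, (r n * f (n+1))^2) ≤ ε * Q₁^2 := by
      have hterm2nn : (0:ℝ) ≤ εmax^(k-1)*M^2/(B₁*c')^(2*k) :=
        div_nonneg (mul_nonneg hemk.le (sq_nonneg M)) hden.le
      have hQ₁sq : Q₁^2 = (τ+1)^2 + εmax^(k-1)*M^2/(B₁*c')^(2*k) := by
        rw [hQ₁]
        exact Real.sq_sqrt (by nlinarith only [hterm2nn, sq_nonneg (τ+1)])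
      have hA : (∑' n, (r n * g (n+1))^2)/ε ≤ (τ+1)^2*ε := by
        rw [div_le_iff₀ hε]
        nlinarith only [h2]
      have hBb2 : (Real.sqrt ε/(B₁*c'))^(2*k) * (∑' n, (w n)^2)
          ≤ (ε * (εmax^(k-1)/(B₁*c')^(2*k))) * M^2 := by
        apply mul_le_mul h3 hwM hwnn
        exact mul_nonneg hε.le (div_nonneg hemk.le hden.le)
      rw [hQ₁sq]
      calc (∑' n, (r n * f (n+1))^2)
          ≤ (∑' n, (r n * g (n+1))^2)/ε + (Real.sqrt ε/(B₁*c'))^(2*k) * (∑' n, (w n)^2) := h1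
        _ ≤ (τ+1)^2*ε + (ε * (εmax^(k-1)/(B₁*c')^(2*k))) * M^2 := by
            linarith only [hA, hBb2]
        _ = ε * ((τ+1)^2 + εmax^(k-1)*M^2/(B₁*c')^(2*k)) := by ring
    calc Real.sqrt (∑' n, (r n * f (n+1))^2) ≤ Real.sqrt (ε * Q₁^2) := Real.sqrt_le_sqrt h4
      _ = Real.sqrt ε * Q₁ := by rw [Real.sqrt_mul hε.le, Real.sqrt_sq hQ₁pos.le]
      _ = Q₁ * Real.sqrt ε := mul_comm _ _
  -- Terms II and III
  set FII : ℕ → ℝ := fun n => -(s n * (st n - s n) * f (n+1) / (μ^2 + (s n)^2)) with hIIdef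
  set FIII : ℕ → ℝ := fun n => s n * (g (n+1) - gε (n+1)) / (μ^2 + (s n)^2) with hIIIdef
  have h2μ : (0:ℝ) < 2*μ := by linarith only [hμ]
  have hIIc : (0:ℝ) ≤ Real.sqrt T*ε/(2*μ) :=
    div_nonneg (mul_nonneg (Real.sqrt_nonneg T) hε.le) h2μ.le
  have hIIIc : (0:ℝ) ≤ 1/(2*μ) := by positivity
  have hIIptw : ∀ n, |FII n| ≤ (Real.sqrt T*ε/(2*μ)) * |f (n+1)| := by
    intro n
    rw [hIIdef]
    simp only [abs_neg]
    rw [abs_div, abs_of_pos (hdenpos n), abs_mul, abs_mul, abs_of_pos (hspos n)]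
    calc s n * |st n - s n| * |f (n+1)| / (μ^2 + (s n)^2)
        = (s n/(μ^2 + (s n)^2)) * |st n - s n| * |f (n+1)| := by ring
      _ ≤ (1/(2*μ)) * (Real.sqrt T*ε) * |f (n+1)| := by
          apply mul_le_mul_of_nonneg_right _ (abs_nonneg _)
          apply mul_le_mul (hamgm n) (hdφ n) (abs_nonneg _) hIIIc
      _ = (Real.sqrt T*ε/(2*μ)) * |f (n+1)| := by ring
  have hIIIptw : ∀ n, |FIII n| ≤ (1/(2*μ)) * |g (n+1) - gε (n+1)| := by
    intro n
    rw [hIIIdef]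
    simp only
    rw [abs_div, abs_of_pos (hdenpos n), abs_mul, abs_of_pos (hspos n)]
    calc s n * |g (n+1) - gε (n+1)| / (μ^2 + (s n)^2)
        = (s n/(μ^2 + (s n)^2)) * |g (n+1) - gε (n+1)| := by ring
      _ ≤ (1/(2*μ)) * |g (n+1) - gε (n+1)| :=
          mul_le_mul_of_nonneg_right (hamgm n) (abs_nonneg _)
  have hIIsum : Summable (fun n => (FII n)^2) := sq_summable_of_abs_le hIIptw hfsum'
  have hIIIsum : Summable (fun n => (FIII n)^2) := sq_summable_of_abs_le hIIIptw hdsum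
  have hLII : Real.sqrt (∑' n, (FII n)^2) ≤ Q₂ * Real.sqrt ε := by
    calc Real.sqrt (∑' n, (FII n)^2)
        ≤ (Real.sqrt T*ε/(2*μ)) * Real.sqrt (∑' n, (f (n+1))^2) :=
          l2_bound hIIc hIIptw hfsum'
      _ ≤ (Real.sqrt T*ε/(2*μ)) * M := mul_le_mul_of_nonneg_left hLf hIIc
      _ = (Real.sqrt T * M) * (ε/(2*μ)) := by ring
      _ ≤ (Real.sqrt T * M) * (Real.sqrt ε/(2*Real.sqrt η)) :=
          mul_le_mul_of_nonneg_left hfrac (mul_nonneg (Real.sqrt_nonneg T) hM.le)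
      _ = Q₂ * Real.sqrt ε := by rw [hQ₂]; ring
  have hLIII : Real.sqrt (∑' n, (FIII n)^2) ≤ Q₃ * Real.sqrt ε := by
    calc Real.sqrt (∑' n, (FIII n)^2)
        ≤ (1/(2*μ)) * Real.sqrt (∑' n, (g (n+1) - gε (n+1))^2) :=
          l2_bound hIIIc hIIIptw hdsum
      _ ≤ (1/(2*μ)) * ε := mul_le_mul_of_nonneg_left hnoise hIIIc
      _ = ε/(2*μ) := by ring
      _ ≤ Real.sqrt ε/(2*Real.sqrt η) := hfrac
      _ = Q₃ * Real.sqrt ε := by rw [hQ₃]; ring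
  -- decomposition of the error
  have hdecomp : ∀ n : ℕ, f (n+1) - Φ (n+1) φε * gε (n+1) / (μ^2 + (Φ (n+1) φε)^2)
      = r n * f (n+1) + (FII n + FIII n) := by
    intro n
    have hs_eq : Φ (n+1) φε = s n := by rw [hsdef]
    rw [hs_eq, hrdef, hIIdef, hIIIdef]
    simp only
    rw [hgst n]
    field_simp
    ring
  have hIIIIIsum : Summable (fun n => (FII n + FIII n)^2) := sq_summable_add hIIsum hIIIsum
  have hsqrt_half : ε ^ ((1:ℝ)/2) = Real.sqrt ε := (Real.sqrt_eq_rpow ε).symm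
  calc Real.sqrt (∑' n, (f (n+1) - Φ (n+1) φε * gε (n+1) / (μ^2 + (Φ (n+1) φε)^2))^2)
      = Real.sqrt (∑' n, (r n * f (n+1) + (FII n + FIII n))^2) := by
        congr 1; exact tsum_congr fun n => by rw [hdecomp n]
    _ ≤ Real.sqrt (∑' n, (r n * f (n+1))^2) + Real.sqrt (∑' n, (FII n + FIII n)^2) :=
        my_minkowski hIsum hIIIIIsum
    _ ≤ Real.sqrt (∑' n, (r n * f (n+1))^2)
        + (Real.sqrt (∑' n, (FII n)^2) + Real.sqrt (∑' n, (FIII n)^2)) := by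
        have h6 := my_minkowski hIIsum hIIIsum
        linarith only [h6]
    _ ≤ Q₁ * Real.sqrt ε + (Q₂ * Real.sqrt ε + Q₃ * Real.sqrt ε) := by
        linarith only [hLI, hLII, hLIII]
    _ = (Q₁ + Q₂ + Q₃) * ε ^ ((1:ℝ)/2) := by rw [hsqrt_half]; ring
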